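/- Let k be a field, G a finite group, R a fully G-graded k-algebra, K and H subgroups of G, and g ∈ G. Write ᵍH := gHg⁻¹. Then the map induced by multiplication in R gives an isomorphism R_K ⊗_{R_{[K ∩ ᵍH]}} R_{[gH]} ≅ R_{[KgH]} of R_K–R_H-bimodules, where KgH denotes the double coset {tgz : t ∈ K, z ∈ H}; in particular the k-linear map r₁ ⊗ r₂ ↦ r₁r₂ from R_K ⊗_{R_{[K ∩ ᵍH]}} R_{[gH]} to R_{[KgH]} is bijective. -/

import Mathlib

/-!
Formalization of statements about fully group-graded algebras
(Coconeț–Todea, "Hochschild cohomology of fully group-graded algebras as Mackey functor").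
-/

set_option linter.unusedSectionVars false

open scoped Pointwise TensorProduct

/-- A fully (= strongly) `G`-graded `k`-algebra structure on `R`: a family of `k`-subspaces
`𝒜 g` (`g ∈ G`) giving an internal direct sum decomposition `R = ⊕_{g ∈ G} R_g`, with the
unit of `R` lying in the identity component, and satisfying `R_g · R_h = R_{gh}` for all
`g, h ∈ G`. -/
structure IsFullyGraded {k G R : Type*} [Field k] [Group G] [DecidableEq G]
    [Ring R] [Algebra k R] (𝒜 : G → Submodule k R) : Prop where
  internal : DirectSum.IsInternal 𝒜
  one_mem : (1 : R) ∈ 𝒜 1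
  mul_eq : ∀ g h : G, 𝒜 g * 𝒜 h = 𝒜 (g * h)

variable {k G R : Type*} [Field k] [Group G] [DecidableEq G] [Ring R] [Algebra k R]

/-- For a subset `S ⊆ G`, the `k`-subspace `R_{[S]} = ⊕_{s ∈ S} R_s` of `R`. -/
def gradedPart (𝒜 : G → Submodule k R) (S : Set G) : Submodule k R :=
  ⨆ s : S, 𝒜 (s : G)

theorem le_gradedPart (𝒜 : G → Submodule k R) {S : Set G} {s : G} (hs : s ∈ S) :
    𝒜 s ≤ gradedPart 𝒜 S :=
  le_iSup (fun t : S => 𝒜 (t : G)) ⟨s, hs⟩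

theorem gradedPart_mono (𝒜 : G → Submodule k R) {S T : Set G} (hST : S ⊆ T) :
    gradedPart 𝒜 S ≤ gradedPart 𝒜 T :=
  iSup_le fun s => le_gradedPart 𝒜 (hST s.2)

theorem gradedPart_mul_le (𝒜 : G → Submodule k R)
    (hmul : ∀ g h : G, 𝒜 g * 𝒜 h ≤ 𝒜 (g * h)) (S T : Set G) :
    gradedPart 𝒜 S * gradedPart 𝒜 T ≤ gradedPart 𝒜 (S * T) := by
  rw [gradedPart, Submodule.iSup_mul]
  refine iSup_le fun s => ?_
  rw [gradedPart, Submodule.mul_iSup]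
  refine iSup_le fun t => ?_
  exact le_trans (hmul s t) (le_gradedPart 𝒜 (Set.mul_mem_mul s.2 t.2))

/-- The conjugate subgroup `ᵍH = g H g⁻¹` (an element `x` lies in it iff `g⁻¹ x g ∈ H`). -/
def conjSubgroup (g : G) (H : Subgroup G) : Subgroup G where
  carrier := {x : G | g⁻¹ * x * g ∈ H}
  one_mem' := by simp [H.one_mem]
  mul_mem' {a b} ha hb := by
    have h1 : (g⁻¹ * a * g) * (g⁻¹ * b * g) ∈ H := H.mul_mem ha hb
    rwa [show (g⁻¹ * a * g) * (g⁻¹ * b * g) = g⁻¹ * (a * b) * g by group] at h1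
  inv_mem' {a} ha := by
    have h1 : (g⁻¹ * a * g)⁻¹ ∈ H := H.inv_mem ha
    rwa [show (g⁻¹ * a * g)⁻¹ = g⁻¹ * a⁻¹ * g by group] at h1

theorem mem_conjSubgroup (g : G) (H : Subgroup G) (x : G) :
    x ∈ conjSubgroup g H ↔ g⁻¹ * x * g ∈ H := Iff.rfl

theorem conjSubgroup_coe (g : G) (H : Subgroup G) :
    (conjSubgroup g H : Set G) = {g} * (H : Set G) * {g⁻¹} := by
  ext x
  simp only [SetLike.mem_coe, mem_conjSubgroup, Set.mem_mul, Set.mem_singleton_iff]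
  constructor
  · intro hx
    refine ⟨g * (g⁻¹ * x * g), ⟨g, rfl, g⁻¹ * x * g, hx, rfl⟩, g⁻¹, rfl, by group⟩
  · rintro ⟨y, ⟨a, ha, b, hb, hy⟩, c, hc, hx⟩
    rw [← hx, ← hy, ha, hc]
    have h2 : g⁻¹ * (g * b * g⁻¹) * g = b := by group
    rwa [h2]

/-- The `k`-linear map `↥A ⊗[k] ↥B → R` induced by multiplication in `R`. -/
noncomputable def mulTensor (A B : Submodule k R) : (↥A ⊗[k] ↥B) →ₗ[k] R :=
  TensorProduct.lift
    (LinearMap.mk₂ k (fun (a : ↥A) (b : ↥B) => (a : R) * (b : R))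
      (fun a₁ a₂ b => by simp [add_mul])
      (fun c a b => by simp [smul_mul_assoc])
      (fun a b₁ b₂ => by simp [mul_add])
      (fun c a b => by simp [mul_smul_comm]))

@[simp] theorem mulTensor_tmul (A B : Submodule k R) (a : ↥A) (b : ↥B) :
    mulTensor A B (a ⊗ₜ[k] b) = (a : R) * (b : R) := rfl

/-- The `k`-submodule of `↥A ⊗[k] ↥B` spanned by the balancedness relations over a middle
`k`-submodule `D` of `R` (with `D` acting by multiplication in `R`): the corresponding
quotient is the balanced tensor product `A ⊗_D B`. -/
noncomputable def balancedRel (A B D : Submodule k R) : Submodule k (↥A ⊗[k] ↥B) :=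
  Submodule.span k
    {z : ↥A ⊗[k] ↥B | ∃ (a : ↥A) (d : ↥D) (b : ↥B) (a' : ↥A) (b' : ↥B),
      (a' : R) = (a : R) * (d : R) ∧ ((b' : R) = (d : R) * (b : R)) ∧
      z = a' ⊗ₜ[k] b - a ⊗ₜ[k] b'}

/-- The balanced tensor product `A ⊗_D B`, realised as a quotient of `↥A ⊗[k] ↥B`. -/
noncomputable abbrev balancedTensor (A B D : Submodule k R) : Type _ :=
  @HasQuotient.Quotient (↥A ⊗[k] ↥B) (Submodule k (↥A ⊗[k] ↥B))
    (Submodule.hasQuotient (R := k) (M := ↥A ⊗[k] ↥B)) (balancedRel A B D)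


theorem mul_mem_graded {𝒜 : G → Submodule k R} (hR : IsFullyGraded 𝒜) {x y : G} {a b : R}
    (ha : a ∈ 𝒜 x) (hb : b ∈ 𝒜 y) : a * b ∈ 𝒜 (x * y) :=
  (hR.mul_eq x y) ▸ Submodule.mul_mem_mul ha hb

theorem exists_sum_one {𝒜 : G → Submodule k R} (hR : IsFullyGraded 𝒜) (x : G) :
    ∃ (n : ℕ) (u : Fin n → ↥(𝒜 x)) (v : Fin n → ↥(𝒜 x⁻¹)),
      ∑ i, (u i : R) * (v i : R) = 1 := by
  have h1 : (1 : R) ∈ 𝒜 x * 𝒜 x⁻¹ := by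
    rw [hR.mul_eq, mul_inv_cancel]; exact hR.one_mem
  refine Submodule.mul_induction_on h1 ?_ ?_
  · intro m hm nn hn
    exact ⟨1, fun _ => ⟨m, hm⟩, fun _ => ⟨nn, hn⟩, by simp⟩
  · rintro r s ⟨n₁, u₁, v₁, h₁⟩ ⟨n₂, u₂, v₂, h₂⟩
    refine ⟨n₁ + n₂, Fin.append u₁ u₂, Fin.append v₁ v₂, ?_⟩
    rw [Fin.sum_univ_add]
    simp only [Fin.append_left, Fin.append_right, h₁, h₂]

set_option maxHeartbeats 1000000 in
theorem exists_component {𝒜 : G → Submodule k R} (hR : IsFullyGraded 𝒜)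
    (SA SB SD : Set G) {x : G} (t : G) (ht1 : t ∈ SA) (ht2 : t⁻¹ * x ∈ SB)
    (ht3 : ∀ s ∈ SA, ∀ y ∈ SB, s * y = x → t⁻¹ * s ∈ SD) :
    ∃ φ : ↥(𝒜 x) →ₗ[k] balancedTensor (gradedPart 𝒜 SA) (gradedPart 𝒜 SB) (gradedPart 𝒜 SD),
      ∀ (s : G) (hs : s ∈ SA) (a : R) (ha : a ∈ 𝒜 s) (y : G) (hy : y ∈ SB) (b : R)
        (hb : b ∈ 𝒜 y) (hxy : s * y = x),
        φ ⟨a * b, hxy ▸ mul_mem_graded hR ha hb⟩ =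
          Submodule.Quotient.mk
            (⟨a, le_gradedPart 𝒜 hs ha⟩ ⊗ₜ[k] ⟨b, le_gradedPart 𝒜 hy hb⟩) := by
  classical
  obtain ⟨n, u, v, huv⟩ := exists_sum_one hR t
  set A := gradedPart 𝒜 SA with hA
  set B := gradedPart 𝒜 SB with hB
  set D := gradedPart 𝒜 SD with hD
  refine ⟨∑ i : Fin n,
      ((Submodule.mkQ (R := k) (M := ↥A ⊗[k] ↥B) (balancedRel A B D) :).comp
        ((TensorProduct.mk k ↥A ↥B
            (⟨(u i : R), le_gradedPart 𝒜 ht1 (u i).2⟩ : ↥A)).comp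
          (LinearMap.codRestrict B
            ((LinearMap.mulLeft k ((v i : R))).comp (𝒜 x).subtype)
            fun c => le_gradedPart 𝒜 ht2 (mul_mem_graded hR (v i).2 c.2)))), ?_⟩
  intro s hs a ha y hy b hb hxy
  rw [LinearMap.sum_apply]
  have hbB : b ∈ B := le_gradedPart 𝒜 hy hb
  have hmemA : ∀ i : Fin n, (u i : R) * ((v i : R) * a) ∈ A := by
    intro i
    have h1 : (u i : R) * ((v i : R) * a) ∈ 𝒜 (t * (t⁻¹ * s)) :=
      mul_mem_graded hR (u i).2 (mul_mem_graded hR (v i).2 ha)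
    rw [mul_inv_cancel_left] at h1
    exact le_gradedPart 𝒜 hs h1
  have step : ∀ i : Fin n,
      ((Submodule.mkQ (R := k) (M := ↥A ⊗[k] ↥B) (balancedRel A B D) :).comp
        ((TensorProduct.mk k ↥A ↥B
            (⟨(u i : R), le_gradedPart 𝒜 ht1 (u i).2⟩ : ↥A)).comp
          (LinearMap.codRestrict B
            ((LinearMap.mulLeft k ((v i : R))).comp (𝒜 x).subtype)
            fun c => le_gradedPart 𝒜 ht2 (mul_mem_graded hR (v i).2 c.2))))
        ⟨a * b, hxy ▸ mul_mem_graded hR ha hb⟩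
      = (balancedRel A B D).mkQ
          ((⟨(u i : R) * ((v i : R) * a), hmemA i⟩ : ↥A) ⊗ₜ[k] (⟨b, hbB⟩ : ↥B)) := by
    intro i
    simp only [LinearMap.comp_apply, LinearMap.codRestrict_apply, Submodule.coe_subtype,
      TensorProduct.mk_apply, Submodule.mkQ_apply]
    rw [Submodule.Quotient.eq]
    have hgen : ((⟨(u i : R) * ((v i : R) * a), hmemA i⟩ : ↥A) ⊗ₜ[k] (⟨b, hbB⟩ : ↥B)) -
        ((⟨(u i : R), le_gradedPart 𝒜 ht1 (u i).2⟩ : ↥A) ⊗ₜ[k]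
          (⟨(v i : R) * (a * b), le_gradedPart 𝒜 ht2
            (mul_mem_graded hR (v i).2 (hxy ▸ mul_mem_graded hR ha hb))⟩ : ↥B))
        ∈ balancedRel A B D := by
      apply Submodule.subset_span
      refine ⟨⟨(u i : R), le_gradedPart 𝒜 ht1 (u i).2⟩,
        ⟨(v i : R) * a, le_gradedPart 𝒜 (ht3 s hs y hy hxy) (mul_mem_graded hR (v i).2 ha)⟩,
        ⟨b, hbB⟩, ⟨(u i : R) * ((v i : R) * a), hmemA i⟩,
        ⟨(v i : R) * (a * b), _⟩, rfl, (mul_assoc _ _ _).symm, rfl⟩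
    have := Submodule.neg_mem (R := k) (M := ↥A ⊗[k] ↥B) _ hgen
    exact (neg_sub (α := ↥A ⊗[k] ↥B) _ _) ▸ this
  rw [Finset.sum_congr rfl fun i _ => step i, ← map_sum, ← TensorProduct.sum_tmul]
  have hsum : (∑ i : Fin n, (⟨(u i : R) * ((v i : R) * a), hmemA i⟩ : ↥A))
      = (⟨a, le_gradedPart 𝒜 hs ha⟩ : ↥A) := by
    apply Subtype.ext
    push_cast
    simp_rw [← mul_assoc]
    rw [← Finset.sum_mul, huv, one_mul]
  rw [hsum, Submodule.mkQ_apply]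

/-- The `k`-linear map `A ⊗_D B → R`, `r₁ ⊗ r₂ ↦ r₁ r₂`, induced by multiplication in `R`
on the balanced tensor product. -/
noncomputable def mulQuot (A B D : Submodule k R) : balancedTensor A B D →ₗ[k] R :=
  (Submodule.liftQ (R := k) (M := ↥A ⊗[k] ↥B) (balancedRel A B D) (mulTensor A B)
    (by
      rw [balancedRel, Submodule.span_le]
      rintro z ⟨a, d, b, a', b', ha', hb', rfl⟩
      simp only [SetLike.mem_coe, LinearMap.mem_ker, map_sub, mulTensor_tmul, ha', hb']
      rw [mul_assoc, sub_self]) :)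


theorem aux_injective {𝒜 : G → Submodule k R} (hR : IsFullyGraded 𝒜)
    (SA SB SD SP : Set G)
    (hAB : ∀ s ∈ SA, ∀ y ∈ SB, s * y ∈ SP)
    (hrep : ∀ x ∈ SP, ∃ t, t ∈ SA ∧ t⁻¹ * x ∈ SB ∧
        ∀ s ∈ SA, ∀ y ∈ SB, s * y = x → t⁻¹ * s ∈ SD) :
    Function.Injective
      (mulQuot (gradedPart 𝒜 SA) (gradedPart 𝒜 SB) (gradedPart 𝒜 SD)) := by
  classical
  set A := gradedPart 𝒜 SA with hA
  set B := gradedPart 𝒜 SB with hB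
  set D := gradedPart 𝒜 SD with hD
  have hcomp : ∀ x : G, x ∈ SP → ∃ φ : ↥(𝒜 x) →ₗ[k] balancedTensor A B D,
      ∀ (s : G) (hs : s ∈ SA) (a : R) (ha : a ∈ 𝒜 s) (y : G) (hy : y ∈ SB) (b : R)
        (hb : b ∈ 𝒜 y) (hxy : s * y = x),
        φ ⟨a * b, hxy ▸ mul_mem_graded hR ha hb⟩ =
          Submodule.Quotient.mk
            (⟨a, le_gradedPart 𝒜 hs ha⟩ ⊗ₜ[k] ⟨b, le_gradedPart 𝒜 hy hb⟩) := by
    intro x hx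
    obtain ⟨t, ht1, ht2, ht3⟩ := hrep x hx
    exact exists_component hR SA SB SD t ht1 ht2 ht3
  choose! φ hφ using hcomp
  set Ψ : R →ₗ[k] balancedTensor A B D :=
    (DirectSum.toModule k G (balancedTensor A B D) φ).comp
      ((LinearEquiv.ofBijective (DirectSum.coeLinearMap 𝒜) hR.internal).symm :
        R →ₗ[k] DirectSum G fun g' => ↥(𝒜 g')) with hΨdef
  have hΨ : ∀ (x : G) (c : R) (hc : c ∈ 𝒜 x), Ψ c = φ x ⟨c, hc⟩ := by
    intro x c hc
    have he : (LinearEquiv.ofBijective (DirectSum.coeLinearMap 𝒜) hR.internal).symm c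
        = DirectSum.lof k G (fun g' => ↥(𝒜 g')) x ⟨c, hc⟩ := by
      apply (LinearEquiv.ofBijective (DirectSum.coeLinearMap 𝒜) hR.internal).injective
      rw [LinearEquiv.apply_symm_apply, DirectSum.lof_eq_of]
      exact (DirectSum.coeLinearMap_of (A := 𝒜) x ⟨c, hc⟩).symm
    rw [hΨdef, LinearMap.comp_apply, LinearEquiv.coe_coe, he, DirectSum.toModule_lof]
  have key0 : ∀ (s : G) (hs : s ∈ SA) (a : R) (ha : a ∈ 𝒜 s) (y : G) (hy : y ∈ SB)
      (b : R) (hb : b ∈ 𝒜 y),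
      Ψ (a * b) = Submodule.Quotient.mk
        (⟨a, le_gradedPart 𝒜 hs ha⟩ ⊗ₜ[k] ⟨b, le_gradedPart 𝒜 hy hb⟩) := by
    intro s hs a ha y hy b hb
    rw [hΨ (s * y) (a * b) (mul_mem_graded hR ha hb)]
    exact hφ (s * y) (hAB s hs y hy) s hs a ha y hy b hb rfl
  have key : ∀ z : ↥A ⊗[k] ↥B, Ψ (mulTensor A B z) = Submodule.Quotient.mk z := by
    intro z
    induction z using TensorProduct.induction_on with
    | zero => simp
    | add z₁ z₂ h₁ h₂ => rw [map_add, map_add, h₁, h₂, ← Submodule.Quotient.mk_add]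
    | tmul a b =>
      obtain ⟨a, ha⟩ := a
      obtain ⟨b, hb⟩ := b
      rw [mulTensor_tmul]
      refine Submodule.iSup_induction' (p := fun s : SA => 𝒜 (s : G))
        (motive := fun a' ha' => Ψ (a' * b) = Submodule.Quotient.mk
          ((⟨a', ha'⟩ : ↥A) ⊗ₜ[k] (⟨b, hb⟩ : ↥B))) ?_ ?_ ?_ ha
      · rintro ⟨s, hs⟩ a' ha'
        refine Submodule.iSup_induction' (p := fun y : SB => 𝒜 (y : G))
          (motive := fun b' hb' => Ψ (a' * b') = Submodule.Quotient.mk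
            ((⟨a', le_gradedPart 𝒜 hs ha'⟩ : ↥A) ⊗ₜ[k] (⟨b', hb'⟩ : ↥B))) ?_ ?_ ?_ hb
        · rintro ⟨y, hy⟩ b' hb'
          exact key0 s hs a' ha' y hy b' hb'
        · simp only [mul_zero, map_zero]
          exact (congrArg _ (TensorProduct.tmul_zero _ _)).symm
        · intro b₁ b₂ hb₁ hb₂ ih₁ ih₂
          rw [mul_add, map_add, ih₁, ih₂, ← Submodule.Quotient.mk_add,
            ← TensorProduct.tmul_add]
          rfl
      · simp only [zero_mul, map_zero]
        exact (congrArg _ (TensorProduct.zero_tmul _ _)).symm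
      · intro a₁ a₂ ha₁ ha₂ ih₁ ih₂
        rw [add_mul, map_add, ih₁, ih₂, ← Submodule.Quotient.mk_add,
          ← TensorProduct.add_tmul]
        rfl
  intro z₁ z₂ hz
  obtain ⟨w₁, rfl⟩ := Submodule.Quotient.mk_surjective _ z₁
  obtain ⟨w₂, rfl⟩ := Submodule.Quotient.mk_surjective _ z₂
  have hq : ∀ w : ↥A ⊗[k] ↥B,
      mulQuot A B D (Submodule.Quotient.mk w) = mulTensor A B w := fun w =>
    Submodule.liftQ_apply _ _ _
  rw [← key w₁, ← key w₂]
  have h1 : mulTensor A B w₁ = mulTensor A B w₂ := by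
    rw [← hq w₁, ← hq w₂]; exact hz
  rw [h1]


theorem mulQuot_mk {A B D : Submodule k R} (w : ↥A ⊗[k] ↥B) :
    mulQuot A B D (Submodule.Quotient.mk w) = mulTensor A B w := rfl

/-- Let `k` be a field, `G` a finite group, `R` a fully `G`-graded
`k`-algebra, `K, H ≤ G` and `g ∈ G`; write `ᵍH = g H g⁻¹`.  Then multiplication in `R`
induces an isomorphism `R_K ⊗_{R_{[K ∩ ᵍH]}} R_{[gH]} ≅ R_{[KgH]}` of
`R_K`–`R_H`-bimodules, where `KgH = {t g z : t ∈ K, z ∈ H}`; in particular the `k`-linear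
map `r₁ ⊗ r₂ ↦ r₁ r₂` on the balanced tensor product is injective with image exactly
`R_{[KgH]}`. -/
theorem mulQuot_double_coset_bijective [Finite G]
    {𝒜 : G → Submodule k R} (hR : IsFullyGraded 𝒜) (K H : Subgroup G) (g : G) :
    Function.Injective (mulQuot (gradedPart 𝒜 (K : Set G))
      (gradedPart 𝒜 ({g} * (H : Set G)))
      (gradedPart 𝒜 ((K ⊓ conjSubgroup g H : Subgroup G) : Set G))) ∧
    LinearMap.range (mulQuot (gradedPart 𝒜 (K : Set G))
        (gradedPart 𝒜 ({g} * (H : Set G)))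
        (gradedPart 𝒜 ((K ⊓ conjSubgroup g H : Subgroup G) : Set G))) =
      gradedPart 𝒜 ((K : Set G) * {g} * (H : Set G)) := by
  classical
  have hgH : ∀ y : G, y ∈ ({g} : Set G) * (H : Set G) ↔ ∃ h ∈ H, y = g * h := by
    intro y
    rw [Set.mem_mul]
    constructor
    · rintro ⟨a, ha, b, hb, rfl⟩
      rw [Set.mem_singleton_iff] at ha
      exact ⟨b, hb, by rw [ha]⟩
    · rintro ⟨h, hh, rfl⟩
      exact ⟨g, rfl, h, hh, rfl⟩
  have hKgH : ∀ x : G, x ∈ (K : Set G) * {g} * (H : Set G) ↔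
      ∃ κ ∈ K, ∃ h ∈ H, x = κ * g * h := by
    intro x
    rw [Set.mem_mul]
    constructor
    · rintro ⟨a, ha, b, hb, rfl⟩
      rw [Set.mem_mul] at ha
      obtain ⟨c, hc, d, hd, rfl⟩ := ha
      rw [Set.mem_singleton_iff] at hd
      exact ⟨c, hc, b, hb, by rw [hd]⟩
    · rintro ⟨κ, hκ, h, hh, rfl⟩
      exact ⟨κ * g, Set.mul_mem_mul hκ rfl, h, hh, rfl⟩
  have hAB : ∀ s ∈ (K : Set G), ∀ y ∈ ({g} : Set G) * (H : Set G),
      s * y ∈ (K : Set G) * {g} * (H : Set G) := by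
    intro s hs y hy
    obtain ⟨h, hh, rfl⟩ := (hgH y).1 hy
    exact (hKgH _).2 ⟨s, hs, h, hh, (mul_assoc s g h).symm⟩
  have hrep : ∀ x ∈ (K : Set G) * {g} * (H : Set G), ∃ t, t ∈ (K : Set G) ∧
      t⁻¹ * x ∈ ({g} : Set G) * (H : Set G) ∧
      ∀ s ∈ (K : Set G), ∀ y ∈ ({g} : Set G) * (H : Set G), s * y = x →
        t⁻¹ * s ∈ ((K ⊓ conjSubgroup g H : Subgroup G) : Set G) := by
    intro x hx
    obtain ⟨κ, hκ, h, hh, rfl⟩ := (hKgH x).1 hx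
    refine ⟨κ, hκ, (hgH _).2 ⟨h, hh, by group⟩, ?_⟩
    intro s hs y hy hxy
    obtain ⟨h', hh', rfl⟩ := (hgH y).1 hy
    rw [SetLike.mem_coe, Subgroup.mem_inf]
    constructor
    · exact K.mul_mem (K.inv_mem hκ) hs
    · rw [mem_conjSubgroup]
      have hs2 : s = κ * g * h * (g * h')⁻¹ := eq_mul_inv_of_mul_eq hxy
      have h5 : g⁻¹ * (κ⁻¹ * s) * g = h * h'⁻¹ := by rw [hs2]; group
      rw [h5]
      exact H.mul_mem hh (H.inv_mem hh')
  have hinj := aux_injective hR (K : Set G) ({g} * (H : Set G))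
      ((K ⊓ conjSubgroup g H : Subgroup G) : Set G)
      ((K : Set G) * {g} * (H : Set G)) hAB hrep
  refine ⟨hinj, ?_⟩
  apply le_antisymm
  · have hABle : gradedPart 𝒜 (K : Set G) * gradedPart 𝒜 ({g} * (H : Set G)) ≤
        gradedPart 𝒜 ((K : Set G) * {g} * (H : Set G)) := by
      have h3 := gradedPart_mul_le 𝒜 (fun a b => le_of_eq (hR.mul_eq a b)) (K : Set G)
        ({g} * (H : Set G))
      rwa [show (K : Set G) * ({g} * (H : Set G)) = (K : Set G) * {g} * (H : Set G) from
        (mul_assoc _ _ _).symm] at h3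
    have hT : ∀ w : ↥(gradedPart 𝒜 (K : Set G)) ⊗[k] ↥(gradedPart 𝒜 ({g} * (H : Set G))),
        mulTensor _ _ w ∈ gradedPart 𝒜 ((K : Set G) * {g} * (H : Set G)) := by
      intro w
      induction w using TensorProduct.induction_on with
      | zero => rw [map_zero]; exact zero_mem _
      | tmul a b => rw [mulTensor_tmul]; exact hABle (Submodule.mul_mem_mul a.2 b.2)
      | add w₁ w₂ ih₁ ih₂ => rw [map_add]; exact add_mem ih₁ ih₂
    rintro r ⟨q, rfl⟩
    obtain ⟨w, rfl⟩ := Submodule.Quotient.mk_surjective _ q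
    rw [mulQuot_mk]
    exact hT w
  · refine iSup_le fun x => ?_
    obtain ⟨x, hx⟩ := x
    obtain ⟨κ, hκ, h, hh, rfl⟩ := (hKgH x).1 hx
    show 𝒜 (κ * g * h) ≤ _
    intro r hr
    rw [show κ * g * h = κ * (g * h) from mul_assoc κ g h, ← hR.mul_eq] at hr
    refine Submodule.mul_induction_on hr ?_ fun x y hx hy => add_mem hx hy
    intro m hm nn hn
    refine ⟨Submodule.Quotient.mk
      ((⟨m, le_gradedPart 𝒜 hκ hm⟩ : ↥(gradedPart 𝒜 (K : Set G))) ⊗ₜ[k]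
       (⟨nn, le_gradedPart 𝒜 ((hgH (g * h)).2 ⟨h, hh, rfl⟩) hn⟩ :
         ↥(gradedPart 𝒜 ({g} * (H : Set G))))), ?_⟩
    rw [mulQuot_mk, mulTensor_tmul]
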